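/- Let φ : 𝒪_n → 𝒪_n be a ℂ-algebra isomorphism with φ(𝔪) ⊆ 𝔪, and let g : U' → ℂⁿ be a holomorphic map on an open neighbourhood U' of 0 with g(0) = 0 whose component germs at 0 are φ(z_1), …, φ(z_n), so that φ(f) = f ∘ g as germs at 0 for all f ∈ 𝒪_n. Then the derivative of g at 0 is an invertible linear map; consequently, after shrinking U', the map g is a biholomorphism from U' onto an open neighbourhood of 0 in ℂⁿ. -/

import Mathlib

open Filter Topology Set

noncomputable section

/-- `ℂⁿ`. -/
abbrev Cn (n : ℕ) : Type := EuclideanSpace ℂ (Fin n)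

namespace Filter.Germ

/-- The value at `x` of a germ at the neighbourhood filter of `x`. -/
def valueAt {α β : Type*} [TopologicalSpace α] {x : α} (g : Germ (𝓝 x) β) : β :=
  g.liftOn (fun f => f x) fun _ _ h => h.eq_of_nhds

@[simp] lemma valueAt_coe {α β : Type*} [TopologicalSpace α] {x : α} (f : α → β) :
    (↑f : Germ (𝓝 x) β).valueAt = f x := rfl

end Filter.Germ

/-- The `ℂ`-algebra structure on germs of `ℂ`-valued functions,
given by the constant functions. -/
instance germAlgebra {α : Type*} (l : Filter α) : Algebra ℂ (Germ l ℂ) :=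
  ((Filter.Germ.coeRingHom l).comp (Pi.constRingHom α ℂ)).toAlgebra

/-- `𝒪ₙ`: the ring of germs at the origin of `ℂⁿ` of holomorphic functions, realized as the
subalgebra of the ring of germs at `𝓝 0` of `ℂ`-valued functions consisting of germs having a
representative that is complex-analytic on a neighbourhood of `0`. -/
def HoloGerm (n : ℕ) : Subalgebra ℂ (Germ (𝓝 (0 : Cn n)) ℂ) where
  carrier := {g | ∃ F : Cn n → ℂ, AnalyticAt ℂ F 0 ∧ (↑F : Germ (𝓝 (0 : Cn n)) ℂ) = g}
  mul_mem' := by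
    rintro a b ⟨F, hF, rfl⟩ ⟨G, hG, rfl⟩
    exact ⟨F * G, hF.mul hG, by rw [← Filter.Germ.coe_mul]⟩
  add_mem' := by
    rintro a b ⟨F, hF, rfl⟩ ⟨G, hG, rfl⟩
    exact ⟨F + G, hF.add hG, by rw [← Filter.Germ.coe_add]⟩
  algebraMap_mem' := fun c => ⟨fun _ => c, analyticAt_const, rfl⟩

lemma valueAt_add {n : ℕ} (a b : Germ (𝓝 (0 : Cn n)) ℂ) :
    (a + b).valueAt = a.valueAt + b.valueAt := by
  induction a using Filter.Germ.inductionOn with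
  | h f => induction b using Filter.Germ.inductionOn with
    | h g => rfl

lemma valueAt_mul {n : ℕ} (a b : Germ (𝓝 (0 : Cn n)) ℂ) :
    (a * b).valueAt = a.valueAt * b.valueAt := by
  induction a using Filter.Germ.inductionOn with
  | h f => induction b using Filter.Germ.inductionOn with
    | h g => rfl

set_option synthInstance.maxHeartbeats 1000000 in
/-- The maximal ideal `𝔪 ⊆ 𝒪ₙ` of germs vanishing at the origin. -/
def mIdeal (n : ℕ) : Ideal (HoloGerm n) where
  carrier := {g | (g : Germ (𝓝 (0 : Cn n)) ℂ).valueAt = 0}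
  add_mem' := by
    intro a b ha hb
    show ((a + b : HoloGerm n) : Germ (𝓝 (0 : Cn n)) ℂ).valueAt = 0
    rw [Subalgebra.coe_add, valueAt_add, ha, hb, add_zero]
  zero_mem' := by
    show ((0 : HoloGerm n) : Germ (𝓝 (0 : Cn n)) ℂ).valueAt = 0
    rw [Subalgebra.coe_zero]
    rfl
  smul_mem' := by
    intro c x hx
    have hx' : ((x : Germ (𝓝 (0 : Cn n)) ℂ)).valueAt = 0 := hx
    show (((c * x : HoloGerm n) : Germ (𝓝 (0 : Cn n)) ℂ)).valueAt = 0
    rw [Subalgebra.coe_mul, valueAt_mul, hx', mul_zero]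

/-- The germ `zₐ ∈ 𝒪ₙ` of the `a`-th coordinate function. -/
def coordGerm (n : ℕ) (a : Fin n) : HoloGerm n :=
  ⟨(↑(fun z : Cn n => z a) : Germ (𝓝 (0 : Cn n)) ℂ),
    ⟨fun z : Cn n => z a, (EuclideanSpace.proj (𝕜 := ℂ) a).analyticAt 0, rfl⟩⟩


lemma valueAt_neg' {n : ℕ} (a : Germ (𝓝 (0 : Cn n)) ℂ) :
    (-a).valueAt = -a.valueAt := by
  induction a using Filter.Germ.inductionOn with
  | h f => rfl

lemma germ_valueAt_algebraMap {n : ℕ} (c : ℂ) :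
    ((algebraMap ℂ (HoloGerm n) c : HoloGerm n) : Germ (𝓝 (0 : Cn n)) ℂ).valueAt = c := rfl

/-- Let `φ : 𝒪ₙ → 𝒪ₙ` be a `ℂ`-algebra isomorphism with `φ(𝔪) ⊆ 𝔪`, and let `g` be a
holomorphic map on a neighbourhood `U'` of `0` with `g 0 = 0`, whose component germs at `0` are
the `φ(zₐ)`, so that `φ(f) = f ∘ g` as germs at `0` for all `f ∈ 𝒪ₙ`.  Then the derivative of
`g` at `0` is invertible, and after shrinking `U'` the map `g` is a biholomorphism onto an open
neighbourhood of `0` in `ℂⁿ`. -/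
theorem isomorphism_gives_biholomorphism (n : ℕ) (hn : 1 ≤ n)
    (φ : HoloGerm n →ₐ[ℂ] HoloGerm n) (hbij : Function.Bijective φ)
    (hφ : ∀ g ∈ mIdeal n, φ g ∈ mIdeal n)
    (U' : Set (Cn n)) (hU'open : IsOpen U') (hU'mem : (0 : Cn n) ∈ U')
    (g : Cn n → Cn n) (hg : AnalyticOnNhd ℂ g U') (hg0 : g 0 = 0)
    (hcomp : ∀ a : Fin n,
      (↑(fun x : Cn n => g x a) : Germ (𝓝 (0 : Cn n)) ℂ) = ↑(φ (coordGerm n a)))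
    (hpull : ∀ f : HoloGerm n, ∀ F : Cn n → ℂ, AnalyticAt ℂ F 0 →
      (↑F : Germ (𝓝 (0 : Cn n)) ℂ) = ↑f →
      (↑(φ f) : Germ (𝓝 (0 : Cn n)) ℂ) = ↑(F ∘ g)) :
    (∃ L : Cn n ≃L[ℂ] Cn n, (L : Cn n →L[ℂ] Cn n) = fderiv ℂ g 0) ∧
    ∃ V : Set (Cn n), V ⊆ U' ∧ IsOpen V ∧ (0 : Cn n) ∈ V ∧ IsOpen (g '' V) ∧
      Set.InjOn g V ∧
      ∃ h : Cn n → Cn n, AnalyticOnNhd ℂ h (g '' V) ∧ (∀ x ∈ V, h (g x) = x) ∧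
        ∀ y ∈ g '' V, g (h y) = y := by
  
  classical
  have hg0' : AnalyticAt ℂ g 0 := hg 0 hU'mem
  -- Step 1: pick preimages of the coordinate germs under φ, with analytic representatives.
  have exH : ∀ a : Fin n, ∃ Ha : Cn n → ℂ, AnalyticAt ℂ Ha 0 ∧ Ha 0 = 0 ∧
      (Ha ∘ g) =ᶠ[𝓝 (0 : Cn n)] (fun z => z a) := by
    intro a
    obtain ⟨ha, hfa⟩ := hbij.2 (coordGerm n a)
    obtain ⟨Ha, hHa, hGerm⟩ := ha.2
    have hval : (ha : Germ (𝓝 (0 : Cn n)) ℂ).valueAt = Ha 0 := by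
      rw [← hGerm]; rfl
    set c : ℂ := Ha 0 with hc
    -- `ha - c` is in the maximal ideal
    have hmem : ha - algebraMap ℂ (HoloGerm n) c ∈ mIdeal n := by
      show ((ha - algebraMap ℂ (HoloGerm n) c : HoloGerm n) :
          Germ (𝓝 (0 : Cn n)) ℂ).valueAt = 0
      rw [sub_eq_add_neg, Subalgebra.coe_add, valueAt_add, Subalgebra.coe_neg,
        valueAt_neg', germ_valueAt_algebraMap, hval, add_neg_cancel]
    have hmem2 := hφ _ hmem
    have hφc : φ (ha - algebraMap ℂ (HoloGerm n) c)
        = coordGerm n a - algebraMap ℂ (HoloGerm n) c := by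
      rw [map_sub, hfa, AlgHom.commutes]
    rw [hφc] at hmem2
    have hval2 : ((coordGerm n a - algebraMap ℂ (HoloGerm n) c : HoloGerm n) :
        Germ (𝓝 (0 : Cn n)) ℂ).valueAt = -c := by
      rw [sub_eq_add_neg, Subalgebra.coe_add, valueAt_add, Subalgebra.coe_neg,
        valueAt_neg', germ_valueAt_algebraMap]
      have : ((coordGerm n a : HoloGerm n) : Germ (𝓝 (0 : Cn n)) ℂ).valueAt = 0 := rfl
      rw [this, zero_add]
    have hc0 : c = 0 := by
      have h0 : -c = 0 := by rw [← hval2]; exact hmem2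
      exact neg_eq_zero.mp h0
    have hpull' := hpull ha Ha hHa hGerm
    rw [hfa] at hpull'
    have : (↑(Ha ∘ g) : Germ (𝓝 (0 : Cn n)) ℂ) = ↑(fun z : Cn n => z a) := by
      rw [← hpull']; rfl
    exact ⟨Ha, hHa, hc0 ▸ hc.symm ▸ rfl, Filter.Germ.coe_eq.mp this⟩
  choose Ha hHa hHa0 hHaeq using exH
  -- Step 2: assemble the local inverse H
  set H : Cn n → Cn n :=
    fun y => (EuclideanSpace.equiv (Fin n) ℂ).symm (fun a => Ha a y) with hHdef
  have hHanalytic : AnalyticAt ℂ H 0 := by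
    have h1 : AnalyticAt ℂ (fun y : Cn n => fun a : Fin n => Ha a y) 0 :=
      AnalyticAt.pi fun a => hHa a
    exact (((EuclideanSpace.equiv (Fin n) ℂ).symm : (Fin n → ℂ) →L[ℂ] Cn n).analyticAt
      _).comp h1
  have hHcomp : ∀ y : Cn n, ∀ a : Fin n, H y a = Ha a y := fun y a => rfl
  have hHg : ∀ᶠ z in 𝓝 (0 : Cn n), H (g z) = z := by
    filter_upwards [Filter.eventually_all.2 hHaeq] with z hz
    rw [WithLp.ext_iff]
    funext a
    exact (hHcomp (g z) a).trans (hz a)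
  -- Step 3: derivatives
  set A : Cn n →L[ℂ] Cn n := fderiv ℂ g 0 with hA
  set B : Cn n →L[ℂ] Cn n := fderiv ℂ H 0 with hB
  have hdiffg : DifferentiableAt ℂ g 0 := hg0'.differentiableAt
  have hdiffH : DifferentiableAt ℂ H 0 := hHanalytic.differentiableAt
  have hchain : fderiv ℂ (H ∘ g) 0 = B.comp A := by
    rw [fderiv_comp 0 (by rw [hg0]; exact hdiffH) hdiffg, hg0]
  have hid : fderiv ℂ (H ∘ g) 0 = ContinuousLinearMap.id ℂ (Cn n) := by
    have heq : (H ∘ g) =ᶠ[𝓝 (0 : Cn n)] id := hHg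
    rw [heq.fderiv_eq, fderiv_id]
  have hBA : B.comp A = ContinuousLinearMap.id ℂ (Cn n) := by rw [← hchain, hid]
  have hBAfun : ∀ x, B (A x) = x := fun x => by rw [← ContinuousLinearMap.comp_apply, hBA]; rfl
  have hABfun : ∀ x, A (B x) = x := by
    have h1 : (B : Cn n →ₗ[ℂ] Cn n) * (A : Cn n →ₗ[ℂ] Cn n) = 1 :=
      LinearMap.ext fun x => hBAfun x
    have h2 := mul_eq_one_comm.mp h1
    intro x
    exact LinearMap.congr_fun h2 x
  set L : Cn n ≃L[ℂ] Cn n := ContinuousLinearEquiv.equivOfInverse A B hBAfun hABfun with hL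
  have hLcoe : (L : Cn n →L[ℂ] Cn n) = fderiv ℂ g 0 := rfl
  refine ⟨⟨L, hLcoe⟩, ?_⟩
  -- Step 4: inverse function theorem
  have hstrict : HasStrictFDerivAt g (L : Cn n →L[ℂ] Cn n) 0 := by
    rw [hLcoe]; exact hg0'.hasStrictFDerivAt
  set P := hstrict.toOpenPartialHomeomorph g with hP
  have hPcoe : (P : Cn n → Cn n) = g := hstrict.toOpenPartialHomeomorph_coe
  have hPmem : (0 : Cn n) ∈ P.source := hstrict.mem_toOpenPartialHomeomorph_source
  -- Step 5: choose the neighbourhood V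
  obtain ⟨s, hs, hsana⟩ := hHanalytic.exists_mem_nhds_analyticOnNhd
  obtain ⟨Ω, hΩs, hΩopen, hΩmem⟩ := mem_nhds_iff.mp hs
  obtain ⟨W, hWsub, hWopen, hWmem⟩ := eventually_nhds_iff.mp hHg
  set V : Set (Cn n) := P.source ∩ W ∩ (U' ∩ g ⁻¹' Ω) with hV
  have hVopen : IsOpen V :=
    ((P.open_source.inter hWopen).inter
      ((hg.continuousOn).isOpen_inter_preimage hU'open hΩopen))
  have hVmem : (0 : Cn n) ∈ V :=
    ⟨⟨hPmem, hWmem⟩, hU'mem, by simp [hg0, hΩmem]⟩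
  have hVU' : V ⊆ U' := fun x hx => hx.2.1
  have hVsrc : V ⊆ P.source := fun x hx => hx.1.1
  have hVW : ∀ x ∈ V, H (g x) = x := fun x hx => hWsub x hx.1.2
  have himg : g '' V = P '' V := by rw [hPcoe]
  have himgopen : IsOpen (g '' V) := by
    rw [himg]; exact P.isOpen_image_of_subset_source hVopen hVsrc
  refine ⟨V, hVU', hVopen, hVmem, himgopen, ?_, H, ?_, hVW, ?_⟩
  · intro x hx y hy hxy
    rw [← hVW x hx, ← hVW y hy, hxy]
  · rintro y ⟨x, hx, rfl⟩
    exact hsana (g x) (hΩs hx.2.2)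
  · rintro y ⟨x, hx, rfl⟩
    rw [hVW x hx]
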